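/- Let λ ∈ ℂ with |λ| < 1 and define T₀ on entire functions by T₀ f(z) = f'(λz). Then for every entire function f, the sequence (T₀)ⁿ f(0) tends to 0 as n → ∞. In particular |(T₀)ⁿ f (0)| ≤ |λ|^(n(n-1)/2) · n! · sup_{|z| ≤ 1} |f(z)| for all n. -/

import Mathlib

open Finset Metric in
theorem stmt2_iter_formula (l : ℂ) (f : ℂ → ℂ) (hf : Differentiable ℂ f) (n : ℕ) :
    (fun g : ℂ → ℂ => fun w => deriv g (l * w))^[n] f =
      fun w => l ^ (∑ i ∈ range n, i) * iteratedDeriv n f (l ^ n * w) := by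
  have hd : ∀ m : ℕ, Differentiable ℂ (iteratedDeriv m f) := by
    intro m
    exact (hf.contDiff (n := ⊤)).differentiable_iteratedDeriv m
      (by exact_mod_cast WithTop.coe_lt_top _)
  induction n with
  | zero => funext w; simp
  | succ n ih =>
      rw [Function.iterate_succ_apply', ih]
      funext w
      have h1 : ∀ x : ℂ, HasDerivAt (fun z => l ^ (∑ i ∈ range n, i) * iteratedDeriv n f (l ^ n * z))
          (l ^ (∑ i ∈ range n, i) * (deriv (iteratedDeriv n f) (l ^ n * x) * (l ^ n * 1))) x := by
        intro x
        exact ((((hd n) (l ^ n * x)).hasDerivAt.comp x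
          ((hasDerivAt_id x).const_mul (l ^ n)))).const_mul _
      show deriv _ (l * w) = _
      rw [(h1 (l * w)).deriv, sum_range_succ, iteratedDeriv_succ]
      ring_nf

open Finset Metric in
theorem stmt2_cauchy_est (f : ℂ → ℂ) (hf : Differentiable ℂ f) (n : ℕ) :
    ‖iteratedDeriv n f 0‖ ≤ n.factorial *
      sSup ((fun z => ‖f z‖) '' closedBall (0 : ℂ) 1) := by
  set M := sSup ((fun z => ‖f z‖) '' closedBall (0 : ℂ) 1) with hM
  have hbdd : BddAbove ((fun z => ‖f z‖) '' closedBall (0 : ℂ) 1) :=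
    (isCompact_closedBall 0 1).bddAbove_image (continuous_norm.comp hf.continuous).continuousOn
  have hle : ∀ z ∈ closedBall (0 : ℂ) 1, ‖f z‖ ≤ M :=
    fun z hz => le_csSup hbdd ⟨z, hz, rfl⟩
  have hp : HasFPowerSeriesOnBall f (cauchyPowerSeries f 0 1) 0 1 :=
    (hf.differentiableOn.hasFPowerSeriesOnBall (R := 1) one_pos)
  have key := hp.factorial_smul (1 : ℂ) n
  have h2 : ‖iteratedDeriv n f 0‖ ≤ n.factorial * ‖cauchyPowerSeries f 0 1 n‖ := by
    have h3 : iteratedDeriv n f 0 = iteratedFDeriv ℂ n f 0 (fun _ => 1) := by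
      rw [iteratedDeriv_eq_iteratedFDeriv]
    rw [h3, ← key, ← Nat.cast_smul_eq_nsmul ℝ, norm_smul]
    simp only [Real.norm_natCast]
    gcongr
    calc ‖cauchyPowerSeries f 0 1 n (fun _ => 1)‖
        ≤ ‖cauchyPowerSeries f 0 1 n‖ * ∏ _i : Fin n, ‖(1:ℂ)‖ :=
          (cauchyPowerSeries f 0 1 n).le_opNorm _
      _ = ‖cauchyPowerSeries f 0 1 n‖ := by simp
  refine h2.trans ?_
  gcongr
  calc ‖cauchyPowerSeries f 0 1 n‖
      ≤ ((2 * Real.pi)⁻¹ * ∫ θ : ℝ in (0)..2 * Real.pi, ‖f (circleMap 0 1 θ)‖) * |(1:ℝ)|⁻¹ ^ n :=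
        norm_cauchyPowerSeries_le f 0 1 n
    _ ≤ M := by
        rw [abs_one, inv_one, one_pow, mul_one]
        rw [inv_mul_le_iff₀ Real.two_pi_pos]
        calc (∫ θ : ℝ in (0)..2 * Real.pi, ‖f (circleMap 0 1 θ)‖)
            ≤ ∫ _θ : ℝ in (0)..2 * Real.pi, M := by
              apply intervalIntegral.integral_mono_on Real.two_pi_pos.le
              · apply ContinuousOn.intervalIntegrable
                exact (hf.continuous.comp (continuous_circleMap 0 1)).norm.continuousOn
              · exact intervalIntegrable_const
              · intro θ _
                exact hle _ (by simp [circleMap, Complex.norm_exp])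
          _ = 2 * Real.pi * M := by simp [mul_comm]

theorem stmt_2 (l : ℂ) (hl : ‖l‖ < 1) (f : ℂ → ℂ) (hf : Differentiable ℂ f) :
    Filter.Tendsto (fun n : ℕ => (fun g : ℂ → ℂ => fun w => deriv g (l * w))^[n] f 0)
      Filter.atTop (nhds 0) ∧
    ∀ n : ℕ, ‖(fun g : ℂ → ℂ => fun w => deriv g (l * w))^[n] f 0‖
      ≤ ‖l‖ ^ (n * (n - 1) / 2) * n.factorial *
        sSup ((fun z => ‖f z‖) '' Metric.closedBall (0 : ℂ) 1) := by
  set M := sSup ((fun z => ‖f z‖) '' Metric.closedBall (0 : ℂ) 1) with hM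
  set r := ‖l‖ with hr
  have hr0 : 0 ≤ r := norm_nonneg l
  have hM0 : 0 ≤ M := by
    have hbdd : BddAbove ((fun z => ‖f z‖) '' Metric.closedBall (0 : ℂ) 1) :=
      (isCompact_closedBall 0 1).bddAbove_image
        (continuous_norm.comp hf.continuous).continuousOn
    exact (norm_nonneg (f 0)).trans (le_csSup hbdd ⟨0, by simp, rfl⟩)
  -- the bound, in sum_range form
  have hbound : ∀ n : ℕ, ‖(fun g : ℂ → ℂ => fun w => deriv g (l * w))^[n] f 0‖
      ≤ r ^ (∑ i ∈ Finset.range n, i) * n.factorial * M := by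
    intro n
    rw [stmt2_iter_formula l f hf n]
    simp only [mul_zero]
    rw [norm_mul, norm_pow]
    rw [mul_assoc]
    exact mul_le_mul_of_nonneg_left (stmt2_cauchy_est f hf n) (pow_nonneg hr0 _)
  have hbound' : ∀ n : ℕ, ‖(fun g : ℂ → ℂ => fun w => deriv g (l * w))^[n] f 0‖
      ≤ r ^ (n * (n - 1) / 2) * n.factorial * M := by
    intro n
    simpa [Finset.sum_range_id] using hbound n
  refine ⟨?_, hbound'⟩
  -- tendsto
  set a : ℕ → ℝ := fun n => r ^ (∑ i ∈ Finset.range n, i) * n.factorial * M with ha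
  have haz : Filter.Tendsto a Filter.atTop (nhds 0) := by
    have hsum : Summable a := by
      apply summable_of_ratio_norm_eventually_le (r := 1/2) (by norm_num)
      have hratio : Filter.Tendsto (fun n : ℕ => ((n : ℝ) + 1) * r ^ n) Filter.atTop (nhds 0) := by
        have h1 := tendsto_pow_const_mul_const_pow_of_lt_one 1 hr0 hl
        have h2 := tendsto_pow_atTop_nhds_zero_of_lt_one hr0 hl
        have := h1.add h2
        simp only [add_zero, pow_one] at this
        convert this using 2 with n
        ring
      filter_upwards [hratio.eventually (gt_mem_nhds (by norm_num : (0:ℝ) < 1/2))] with n hn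
      have key : a (n + 1) = (((n : ℝ) + 1) * r ^ n) * a n := by
        simp only [ha, Finset.sum_range_succ, pow_add, Nat.factorial_succ]
        push_cast
        ring
      have han : 0 ≤ a n := by
        apply mul_nonneg (mul_nonneg (pow_nonneg hr0 _) (Nat.cast_nonneg _)) hM0
      rw [Real.norm_eq_abs, Real.norm_eq_abs, abs_of_nonneg han, abs_of_nonneg, key]
      · exact mul_le_mul_of_nonneg_right hn.le han
      · rw [key]
        exact mul_nonneg (mul_nonneg (by positivity) (pow_nonneg hr0 _)) han
    exact hsum.tendsto_atTop_zero
  rw [tendsto_zero_iff_norm_tendsto_zero]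
  apply squeeze_zero (fun n => norm_nonneg _) _ haz
  intro n
  exact hbound n
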